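/- arXiv:0910.0130 — 4 statements merged into one kernel-verified Lean document; each statement's English description precedes it below -/
import Mathlib

section
/- Let 𝔛 be a countable set, P a probability measure on {0,1}^𝔛 with correlation function ρ(X') = P{X : X' ⊆ X} for finite X' ⊂ 𝔛, and f: 𝔛 → ℝ with Σ_{X' finite ⊂ 𝔛} ρ(X') ∏_{x∈X'} |f(x)| < ∞. Then the multiplicative functional Φ_f(X) = ∏_{x∈X}(1+f(x)) is defined P-almost everywhere, is absolutely integrable with respect to P, and its expectation equals E_P(Φ_f) = Σ_{X' finite ⊂ 𝔛} ρ(X') ∏_{x∈X'} f(x). -/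
open MeasureTheory Finset Filter Topology

private lemma tendsto_powerset_atTop' {ι : Type*} :
    Tendsto (Finset.powerset : Finset ι → Finset (Finset ι)) atTop atTop := by
  classical
  refine tendsto_atTop_atTop.2 fun U => ⟨U.sup id, fun t ht => ?_⟩
  intro s hs
  exact Finset.mem_powerset.2 ((Finset.le_sup (f := id) hs).trans ht)

private lemma hasSum_prod_finset {ι : Type*} {g : ι → ℝ}
    (hg : Summable fun s : Finset ι => ∏ i ∈ s, |g i|) :
    HasSum (fun s : Finset ι => ∏ i ∈ s, g i) (∏' i, ((1 : ℝ) + g i)) := by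
  classical
  have habs : Summable fun s : Finset ι => ‖∏ i ∈ s, g i‖ := by
    simpa [Real.norm_eq_abs, Finset.abs_prod] using hg
  have hs : Summable fun s : Finset ι => ∏ i ∈ s, g i := habs.of_norm
  have hS := hs.hasSum
  have hp : HasProd (fun i => (1 : ℝ) + g i) (∑' s : Finset ι, ∏ i ∈ s, g i) := by
    have htend : Tendsto (fun t : Finset ι => ∑ s ∈ t.powerset, ∏ i ∈ s, g i) atTop
        (𝓝 (∑' s : Finset ι, ∏ i ∈ s, g i)) := hS.comp tendsto_powerset_atTop'
    have hEq : ∀ t : Finset ι, ∏ i ∈ t, ((1 : ℝ) + g i) = ∑ s ∈ t.powerset, ∏ i ∈ s, g i := by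
      intro t
      calc ∏ i ∈ t, ((1 : ℝ) + g i) = ∏ i ∈ t, (g i + 1) := by
            simp [add_comm]
        _ = ∑ s ∈ t.powerset, ∏ i ∈ s, g i := by
            rw [Finset.prod_add]; simp
    unfold HasProd
    simp only [hEq]; exact htend
  rw [hp.tprod_eq]
  exact hS

/-- If `Σ_{X' finite} ρ(X') ∏_{x∈X'} |f(x)| < ∞`, where `ρ(X') = P{X : X' ⊆ X}` are the
correlation functions of a probability measure `P` on `{0,1}^𝔛`, then the multiplicative
functional `Φ_f(X) = ∏_{x∈X}(1+f(x))` is defined `P`-a.e., absolutely integrable, and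
`E_P(Φ_f) = Σ_{X' finite} ρ(X') ∏_{x∈X'} f(x)`. -/
theorem expectation_multiplicative_functional
    {𝔛 : Type*} [Countable 𝔛]
    (P : Measure (𝔛 → Bool)) [IsProbabilityMeasure P] (f : 𝔛 → ℝ)
    (h : ∑' s : Finset 𝔛,
        P {ω | ∀ x ∈ s, ω x = true} * ∏ x ∈ s, ENNReal.ofReal |f x| ≠ ⊤) :
    (∀ᵐ ω ∂P, Summable (fun x : {x : 𝔛 // ω x = true} => |f x.1|)) ∧
    Integrable (fun ω => ∏' x : {x : 𝔛 // ω x = true}, ((1 : ℝ) + f x.1)) P ∧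
    ∫ ω, (∏' x : {x : 𝔛 // ω x = true}, ((1 : ℝ) + f x.1)) ∂P =
      ∑' s : Finset 𝔛, (P {ω | ∀ x ∈ s, ω x = true}).toReal * ∏ x ∈ s, f x := by
  classical
  -- measurable sets
  have hAmeas : ∀ s : Finset 𝔛, MeasurableSet {ω : 𝔛 → Bool | ∀ x ∈ s, ω x = true} := by
    intro s
    have : {ω : 𝔛 → Bool | ∀ x ∈ s, ω x = true}
        = ⋂ x ∈ (s : Set 𝔛), (fun ω : 𝔛 → Bool => ω x) ⁻¹' {true} := by
      ext ω; simp
    rw [this]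
    exact MeasurableSet.biInter s.countable_toSet
      (fun x _ => (measurable_pi_apply x) (measurableSet_singleton true))
  set hReal : Finset 𝔛 → (𝔛 → Bool) → ℝ :=
    fun s => Set.indicator {ω : 𝔛 → Bool | ∀ x ∈ s, ω x = true} (fun _ => ∏ x ∈ s, f x)
    with hReal_def
  set Fe : Finset 𝔛 → (𝔛 → Bool) → ENNReal :=
    fun s => Set.indicator {ω : 𝔛 → Bool | ∀ x ∈ s, ω x = true}
      (fun _ => ∏ x ∈ s, ENNReal.ofReal |f x|) with Fe_def
  have hFemeas : ∀ s, Measurable (Fe s) :=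
    fun s => Measurable.indicator measurable_const (hAmeas s)
  have hRealmeas : ∀ s, Measurable (hReal s) :=
    fun s => Measurable.indicator measurable_const (hAmeas s)
  -- the embedding of finsets of the support
  have hcond : ∀ (ω : 𝔛 → Bool) (t : Finset {x : 𝔛 // ω x = true}),
      ∀ x ∈ t.map (Function.Embedding.subtype fun x => ω x = true), ω x = true := by
    intro ω t x hx
    rcases Finset.mem_map.1 hx with ⟨y, _, rfl⟩
    exact y.2
  have hrange : ∀ (ω : 𝔛 → Bool) (s : Finset 𝔛), (∀ x ∈ s, ω x = true) →
      s ∈ Set.range (fun t : Finset {x : 𝔛 // ω x = true} =>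
        t.map (Function.Embedding.subtype fun x => ω x = true)) := by
    intro ω s hs
    exact ⟨s.subtype _, Finset.subtype_map_of_mem hs⟩
  have hinj : ∀ ω : 𝔛 → Bool, Function.Injective
      (fun t : Finset {x : 𝔛 // ω x = true} =>
        t.map (Function.Embedding.subtype fun x => ω x = true)) :=
    fun ω => Finset.map_injective _
  -- F ω rewritten as a sum over finsets of the support
  have hFeq : ∀ ω : 𝔛 → Bool,
      (∑' t : Finset {x : 𝔛 // ω x = true}, ∏ x ∈ t, ENNReal.ofReal |f x.1|)
        = ∑' s : Finset 𝔛, Fe s ω := by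
    intro ω
    have hsupp : Function.support (fun s => Fe s ω) ⊆ Set.range
        (fun t : Finset {x : 𝔛 // ω x = true} =>
          t.map (Function.Embedding.subtype fun x => ω x = true)) := by
      intro s hs
      by_cases hc : ∀ x ∈ s, ω x = true
      · exact hrange ω s hc
      · exact absurd (Set.indicator_of_notMem (by exact hc) _) hs
    have := Function.Injective.tsum_eq (hinj ω) (f := fun s => Fe s ω) hsupp
    rw [← this]
    congr 1
    funext t
    rw [Fe_def]
    simp only []
    rw [Set.indicator_of_mem (by exact hcond ω t)]
    rw [Finset.prod_map]
    rfl
  -- lintegral of F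
  have hlin : ∫⁻ ω, (∑' s : Finset 𝔛, Fe s ω) ∂P
      = ∑' s : Finset 𝔛, P {ω | ∀ x ∈ s, ω x = true} * ∏ x ∈ s, ENNReal.ofReal |f x| := by
    rw [lintegral_tsum (fun s => (hFemeas s).aemeasurable)]
    congr 1
    funext s
    rw [Fe_def]
    simp only []
    rw [lintegral_indicator_const (hAmeas s), mul_comm]
  have hae : ∀ᵐ ω ∂P, (∑' s : Finset 𝔛, Fe s ω) ≠ ⊤ := by
    filter_upwards [ae_lt_top (Measurable.ennreal_tsum hFemeas) (by rw [hlin]; exact h)]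
      with ω hω using hω.ne
  -- summability on the good set
  have hgood : ∀ ω : 𝔛 → Bool, (∑' s : Finset 𝔛, Fe s ω) ≠ ⊤ →
      Summable (fun t : Finset {x : 𝔛 // ω x = true} => ∏ x ∈ t, |f x.1|) := by
    intro ω hω
    rw [← hFeq ω] at hω
    have hcoe : ∀ t : Finset {x : 𝔛 // ω x = true},
        (∏ x ∈ t, ENNReal.ofReal |f x.1|)
          = ((∏ x ∈ t, ‖f x.1‖₊ : NNReal) : ENNReal) := by
      intro t
      rw [ENNReal.coe_finset_prod]
      exact Finset.prod_congr rfl fun x _ => (Real.enorm_eq_ofReal_abs _).symm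
    rw [tsum_congr hcoe] at hω
    have := ENNReal.tsum_coe_ne_top_iff_summable.1 hω
    have h2 := NNReal.summable_coe.2 this
    convert h2 using 1
    funext t
    rw [NNReal.coe_prod]
    exact Finset.prod_congr rfl fun x _ => (Real.norm_eq_abs _) ▸ rfl
  -- HasSum of the real terms to the infinite product
  have hHasSum : ∀ ω : 𝔛 → Bool, (∑' s : Finset 𝔛, Fe s ω) ≠ ⊤ →
      HasSum (fun s : Finset 𝔛 => hReal s ω)
        (∏' x : {x : 𝔛 // ω x = true}, ((1 : ℝ) + f x.1)) := by
    intro ω hω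
    have key := hasSum_prod_finset (hgood ω hω)
    refine (Function.Injective.hasSum_iff (hinj ω) ?_).1 ?_
    · intro s hs
      by_cases hc : ∀ x ∈ s, ω x = true
      · exact absurd (hrange ω s hc) hs
      · exact Set.indicator_of_notMem (by exact hc) _
    · convert key using 1
      funext t
      show hReal _ ω = _
      rw [hReal_def]
      simp only []
      rw [Set.indicator_of_mem (by exact hcond ω t), Finset.prod_map]
      rfl
  -- norm bound for the infinite product
  have hbound : ∀ ω : 𝔛 → Bool, (∑' s : Finset 𝔛, Fe s ω) ≠ ⊤ →
      (‖∏' x : {x : 𝔛 // ω x = true}, ((1 : ℝ) + f x.1)‖₊ : ENNReal)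
        ≤ ∑' s : Finset 𝔛, Fe s ω := by
    intro ω hω
    have hsum := hgood ω hω
    have h1 : ‖∏' x : {x : 𝔛 // ω x = true}, ((1 : ℝ) + f x.1)‖
        ≤ ∑' t : Finset {x : 𝔛 // ω x = true}, ∏ x ∈ t, |f x.1| := by
      rw [← (hasSum_prod_finset hsum).tsum_eq]
      calc ‖∑' t : Finset {x : 𝔛 // ω x = true}, ∏ x ∈ t, f x.1‖
          ≤ ∑' t : Finset {x : 𝔛 // ω x = true}, ‖∏ x ∈ t, f x.1‖ :=
            norm_tsum_le_tsum_norm (by simpa [Real.norm_eq_abs, Finset.abs_prod] using hsum)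
        _ = ∑' t : Finset {x : 𝔛 // ω x = true}, ∏ x ∈ t, |f x.1| := by
            simp [Real.norm_eq_abs, Finset.abs_prod]
    calc (‖∏' x : {x : 𝔛 // ω x = true}, ((1 : ℝ) + f x.1)‖₊ : ENNReal)
        = ENNReal.ofReal ‖∏' x : {x : 𝔛 // ω x = true}, ((1 : ℝ) + f x.1)‖ := by
          rw [ofReal_norm_eq_enorm]; rfl
      _ ≤ ENNReal.ofReal (∑' t : Finset {x : 𝔛 // ω x = true}, ∏ x ∈ t, |f x.1|) :=
          ENNReal.ofReal_le_ofReal h1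
      _ = ∑' t : Finset {x : 𝔛 // ω x = true}, ENNReal.ofReal (∏ x ∈ t, |f x.1|) :=
          ENNReal.ofReal_tsum_of_nonneg (fun t => Finset.prod_nonneg fun x _ => abs_nonneg _) hsum
      _ = ∑' t : Finset {x : 𝔛 // ω x = true}, ∏ x ∈ t, ENNReal.ofReal |f x.1| :=
          tsum_congr fun t => ENNReal.ofReal_prod_of_nonneg (fun i _ => abs_nonneg _)
      _ = ∑' s : Finset 𝔛, Fe s ω := hFeq ω
  -- a measurable approximating sequence
  obtain ⟨κ, hκ⟩ := exists_injective_nat (Finset 𝔛)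
  set V : ℕ → Finset (Finset 𝔛) := fun n => Finset.preimage (Finset.range n) κ hκ.injOn
    with V_def
  have hV : Tendsto V atTop atTop := by
    refine tendsto_atTop_atTop.2 fun U => ⟨U.sup κ + 1, fun n hn => ?_⟩
    intro s hs
    rw [V_def]
    simp only [Finset.mem_preimage, Finset.mem_range]
    exact lt_of_lt_of_le (Nat.lt_succ_of_le (Finset.le_sup hs)) hn
  have hphi : ∀ n, Measurable (fun ω => ∑ s ∈ V n, hReal s ω) := fun n =>
    Finset.measurable_sum _ fun s _ => hRealmeas s
  have hΦm : AEStronglyMeasurable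
      (fun ω => ∏' x : {x : 𝔛 // ω x = true}, ((1 : ℝ) + f x.1)) P := by
    refine aestronglyMeasurable_of_tendsto_ae atTop
      (fun n => (hphi n).aestronglyMeasurable) ?_
    filter_upwards [hae] with ω hω
    have hT : Tendsto (fun U : Finset (Finset 𝔛) => ∑ s ∈ U, hReal s ω) atTop
        (𝓝 (∏' x : {x : 𝔛 // ω x = true}, ((1 : ℝ) + f x.1))) := hHasSum ω hω
    exact hT.comp hV
  -- finiteness of the sum of lintegrals
  have hfin : ∑' s : Finset 𝔛, ∫⁻ ω, (‖hReal s ω‖₊ : ENNReal) ∂P ≠ ⊤ := by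
    have heq : ∀ s : Finset 𝔛, ∫⁻ ω, (‖hReal s ω‖₊ : ENNReal) ∂P
        = P {ω | ∀ x ∈ s, ω x = true} * ∏ x ∈ s, ENNReal.ofReal |f x| := by
      intro s
      have hind : ∀ ω, (‖hReal s ω‖₊ : ENNReal)
          = Set.indicator {ω : 𝔛 → Bool | ∀ x ∈ s, ω x = true}
              (fun _ => (‖∏ x ∈ s, f x‖₊ : ENNReal)) ω := by
        intro ω
        rw [hReal_def]
        simp only []
        by_cases hc : ω ∈ {ω : 𝔛 → Bool | ∀ x ∈ s, ω x = true}
        · rw [Set.indicator_of_mem hc, Set.indicator_of_mem hc]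
        · rw [Set.indicator_of_notMem hc, Set.indicator_of_notMem hc]; simp
      rw [lintegral_congr hind, lintegral_indicator_const (hAmeas s), mul_comm]
      congr 1
      calc (‖∏ x ∈ s, f x‖₊ : ENNReal) = ENNReal.ofReal |∏ x ∈ s, f x| :=
            Real.enorm_eq_ofReal_abs _
        _ = ENNReal.ofReal (∏ x ∈ s, |f x|) := by rw [Finset.abs_prod]
        _ = ∏ x ∈ s, ENNReal.ofReal |f x| :=
            ENNReal.ofReal_prod_of_nonneg fun i _ => abs_nonneg _
    simp only [heq]
    exact h
  -- integrability
  have hint : Integrable (fun ω => ∏' x : {x : 𝔛 // ω x = true}, ((1 : ℝ) + f x.1)) P := by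
    refine ⟨hΦm, ?_⟩
    have hle : ∫⁻ ω, (‖∏' x : {x : 𝔛 // ω x = true}, ((1 : ℝ) + f x.1)‖₊ : ENNReal) ∂P
        ≤ ∫⁻ ω, (∑' s : Finset 𝔛, Fe s ω) ∂P :=
      lintegral_mono_ae (hae.mono fun ω hω => hbound ω hω)
    exact lt_of_le_of_lt hle (by rw [hlin]; exact h.lt_top)
  refine ⟨?_, hint, ?_⟩
  · filter_upwards [hae] with ω hω
    have hc : Summable (fun x : {x : 𝔛 // ω x = true} =>
        ∏ y ∈ ({x} : Finset {x : 𝔛 // ω x = true}), |f y.1|) :=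
      (hgood ω hω).comp_injective Finset.singleton_injective
    simpa using hc
  · have hcongr : (fun ω => ∏' x : {x : 𝔛 // ω x = true}, ((1 : ℝ) + f x.1))
        =ᵐ[P] fun ω => ∑' s : Finset 𝔛, hReal s ω :=
      hae.mono fun ω hω => ((hHasSum ω hω).tsum_eq).symm
    rw [integral_congr_ae hcongr,
      integral_tsum (fun s => (hRealmeas s).aestronglyMeasurable) hfin]
    refine tsum_congr fun s => ?_
    rw [hReal_def]
    simp only []
    rw [integral_indicator_const _ (hAmeas s), smul_eq_mul]
    rfl
end

section
/- Let μ ∈ (−1, 1), ρ > 0, and C > 0. Then the double integral ∬_{u_1 ≥ C, u_2 ≥ C, |u_1 − u_2| ≥ ρ} u_1^{μ−1} u_2^{−μ−1} / |u_1 − u_2| du_1 du_2 is finite. -/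
open MeasureTheory Set Real

open scoped ENNReal

lemma my_measurable_rpow_const (c : ℝ) : Measurable fun x : ℝ => x ^ c := by
  have h : (fun x : ℝ => x ^ c) = fun x =>
      if 0 < x then Real.exp (Real.log x * c)
      else if x = 0 then (0:ℝ) ^ c
      else Real.exp (Real.log x * c) * Real.cos (c * Real.pi) := by
    ext x
    rcases lt_trichotomy x 0 with h | h | h
    · rw [if_neg (by linarith), if_neg h.ne, Real.rpow_def_of_neg h, mul_comm c Real.pi]
    · simp [h]
    · rw [if_pos h, Real.rpow_def_of_pos h]
  rw [h]
  refine Measurable.ite (measurableSet_lt measurable_const measurable_id) ?_ ?_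
  · exact Real.measurable_exp.comp (Real.measurable_log.mul measurable_const)
  · refine Measurable.ite (measurableSet_eq_fun measurable_id measurable_const) measurable_const ?_
    exact (Real.measurable_exp.comp (Real.measurable_log.mul measurable_const)).mul measurable_const

lemma my_bound1 {ν ρ C x y : ℝ} (hν1 : -1 < ν) (hρ : 0 < ρ) (hC : 0 < C)
    (hx : C ≤ x) (hxy : x + ρ ≤ y) (h2 : y ≤ 2 * x) :
    x ^ (ν - 1) * y ^ (-ν - 1) / (y - x) ≤
      ρ ^ (-(1:ℝ)/2) * x ^ (-(2:ℝ)) * (y - x) ^ (-(1:ℝ)/2) := by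
  have hx0 : 0 < x := lt_of_lt_of_le hC hx
  have hy0 : 0 < y := by linarith
  have hd : ρ ≤ y - x := by linarith
  have hd0 : 0 < y - x := lt_of_lt_of_le hρ hd
  have e1 : y ^ (-ν - 1) ≤ x ^ (-ν - 1) :=
    Real.rpow_le_rpow_of_nonpos hx0 (by linarith) (by linarith)
  have e2 : (y - x) ^ (-(1:ℝ)/2) ≤ ρ ^ (-(1:ℝ)/2) :=
    Real.rpow_le_rpow_of_nonpos hρ hd (by norm_num)
  calc x ^ (ν - 1) * y ^ (-ν - 1) / (y - x)
      ≤ x ^ (ν - 1) * x ^ (-ν - 1) / (y - x) := by gcongr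
    _ = x ^ (-(2:ℝ)) / (y - x) := by
        rw [← Real.rpow_add hx0, show ν - 1 + (-ν - 1) = (-2:ℝ) by ring]
    _ = x ^ (-(2:ℝ)) * ((y - x) ^ (-(1:ℝ)/2) * (y - x) ^ (-(1:ℝ)/2)) := by
        rw [← Real.rpow_add hd0, show -(1:ℝ)/2 + -(1:ℝ)/2 = (-1:ℝ) by norm_num,
          Real.rpow_neg_one, div_eq_mul_inv]
    _ ≤ x ^ (-(2:ℝ)) * (ρ ^ (-(1:ℝ)/2) * (y - x) ^ (-(1:ℝ)/2)) := by
        gcongr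
    _ = ρ ^ (-(1:ℝ)/2) * x ^ (-(2:ℝ)) * (y - x) ^ (-(1:ℝ)/2) := by ring

lemma my_bound2 {ν ρ C x y : ℝ} (hν1 : -1 < ν) (hρ : 0 < ρ) (hC : 0 < C)
    (hx : C ≤ x) (hxy : x + ρ ≤ y) (h2 : 2 * x ≤ y) :
    x ^ (ν - 1) * y ^ (-ν - 1) / (y - x) ≤
      2 * x ^ ((ν - 1)/2 - 1) * y ^ (-((ν - 1)/2) - 2) := by
  set s : ℝ := (ν - 1)/2 with hs
  have hx0 : 0 < x := lt_of_lt_of_le hC hx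
  have hy0 : 0 < y := by linarith
  have hd0 : 0 < y - x := by linarith
  have hhalf : y / 2 ≤ y - x := by linarith
  have hxy' : x ≤ y := by linarith
  have e1 : x ^ (ν - 1) = x ^ (s - 1) * x ^ (ν - s) := by
    rw [← Real.rpow_add hx0]; congr 1; ring
  have e2 : x ^ (ν - s) ≤ y ^ (ν - s) := by
    apply Real.rpow_le_rpow hx0.le hxy'
    rw [hs]; linarith
  have key1 : x ^ (ν - 1) * y ^ (-ν - 1) ≤ x ^ (s - 1) * y ^ (-s - 1) := by
    rw [e1]
    calc x ^ (s - 1) * x ^ (ν - s) * y ^ (-ν - 1)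
        ≤ x ^ (s - 1) * y ^ (ν - s) * y ^ (-ν - 1) := by gcongr
      _ = x ^ (s - 1) * y ^ (-s - 1) := by
          rw [mul_assoc, ← Real.rpow_add hy0, show ν - s + (-ν - 1) = -s - 1 by ring]
  calc x ^ (ν - 1) * y ^ (-ν - 1) / (y - x)
      ≤ x ^ (s - 1) * y ^ (-s - 1) / (y - x) := by gcongr
    _ ≤ x ^ (s - 1) * y ^ (-s - 1) / (y / 2) := by
        apply div_le_div_of_nonneg_left (by positivity) (by positivity) hhalf
    _ = 2 * x ^ (s - 1) * (y ^ (-s - 1) * y ^ (-1:ℝ)) := by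
        rw [Real.rpow_neg_one]; field_simp
    _ = 2 * x ^ (s - 1) * y ^ (-s - 2) := by
        rw [← Real.rpow_add hy0, show -s - 1 + (-1:ℝ) = -s - 2 by ring]

lemma my_pieceA1 (ρ C : ℝ) (hρ : 0 < ρ) (hC : 0 < C) :
    ∫⁻ p : ℝ × ℝ in {p : ℝ × ℝ | (C ≤ p.1 ∧ p.1 + ρ ≤ p.2) ∧ p.2 ≤ 2 * p.1},
      ENNReal.ofReal (ρ ^ (-(1:ℝ)/2) * p.1 ^ (-(2:ℝ)) * (p.2 - p.1) ^ (-(1:ℝ)/2)) < ⊤ := by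
  set c : ℝ := ρ ^ (-(1:ℝ)/2) with hcdef
  have hc : 0 ≤ c := Real.rpow_nonneg hρ.le _
  set A1 : Set (ℝ × ℝ) := {p : ℝ × ℝ | (C ≤ p.1 ∧ p.1 + ρ ≤ p.2) ∧ p.2 ≤ 2 * p.1} with hA1
  have mA1 : MeasurableSet A1 := by
    apply MeasurableSet.inter
    · exact (measurableSet_le measurable_const measurable_fst).inter
        (measurableSet_le (measurable_fst.add_const ρ) measurable_snd)
    · exact measurableSet_le measurable_snd (measurable_fst.const_mul 2)
  set g : ℝ × ℝ → ℝ≥0∞ :=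
    fun p => ENNReal.ofReal (c * p.1 ^ (-(2:ℝ)) * (p.2 - p.1) ^ (-(1:ℝ)/2)) with hgdef
  have mg : Measurable g := by
    apply ENNReal.measurable_ofReal.comp
    exact ((measurable_const.mul ((my_measurable_rpow_const _).comp measurable_fst))).mul
      ((my_measurable_rpow_const _).comp (measurable_snd.sub measurable_fst))
  have hrw : ∫⁻ p : ℝ × ℝ in A1, g p = ∫⁻ x : ℝ, ∫⁻ y : ℝ, (A1.indicator g) (x, y) := by
    rw [← lintegral_indicator mA1, Measure.volume_eq_prod,
      lintegral_prod _ ((mg.indicator mA1).aemeasurable)]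
  rw [hrw]
  have inner_bound : ∀ x : ℝ, (∫⁻ y : ℝ, (A1.indicator g) (x, y)) ≤
      (Ici C).indicator (fun x : ℝ => ENNReal.ofReal (2 * c * x ^ (-(3:ℝ)/2))) x := by
    intro x
    by_cases hx : C ≤ x
    · rw [indicator_of_mem (show x ∈ Ici C from hx)]
      have hx0 : 0 < x := lt_of_lt_of_le hC hx
      have hslice : ∀ y : ℝ, (A1.indicator g) (x, y) =
          (Icc (x + ρ) (2 * x)).indicator (fun y => g (x, y)) y := by
        intro y
        by_cases hy : y ∈ Icc (x + ρ) (2 * x)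
        · rw [indicator_of_mem hy, indicator_of_mem (show (x, y) ∈ A1 from ⟨⟨hx, hy.1⟩, hy.2⟩)]
        · rw [indicator_of_notMem hy,
            indicator_of_notMem (fun hmem => hy ⟨hmem.1.2, hmem.2⟩)]
      rw [lintegral_congr hslice, lintegral_indicator measurableSet_Icc,
        setLIntegral_congr (Ioc_ae_eq_Icc (μ := volume) (a := x + ρ) (b := 2 * x)).symm]
      by_cases hle : x + ρ ≤ 2 * x
      · have hint : IntegrableOn (fun y : ℝ => (y - x) ^ (-(1:ℝ)/2)) (Ioc (x + ρ) (2 * x)) := by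
          apply (ContinuousOn.integrableOn_Icc ?_).mono_set Ioc_subset_Icc_self
          apply ContinuousOn.rpow_const (continuousOn_id.sub continuousOn_const)
          intro y hy
          left
          have : ρ ≤ y - x := by have := hy.1; linarith
          have : 0 < y - x := lt_of_lt_of_le hρ this
          exact this.ne'
        have hnn : 0 ≤ᵐ[volume.restrict (Ioc (x + ρ) (2 * x))]
            fun y : ℝ => (y - x) ^ (-(1:ℝ)/2) := by
          filter_upwards [ae_restrict_mem measurableSet_Ioc] with y hy
          have h1 : 0 < y - x := by have := hy.1; linarith
          positivity
        have hfac : ∀ y : ℝ, g (x, y) =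
            ENNReal.ofReal (c * x ^ (-(2:ℝ))) * ENNReal.ofReal ((y - x) ^ (-(1:ℝ)/2)) := by
          intro y
          rw [hgdef]
          exact ENNReal.ofReal_mul (by positivity)
        rw [lintegral_congr fun y => hfac y,
          lintegral_const_mul' _ _ ENNReal.ofReal_ne_top,
          ← ofReal_integral_eq_lintegral_ofReal hint hnn]
        have hval : ∫ y in Ioc (x + ρ) (2 * x), (y - x) ^ (-(1:ℝ)/2) =
            2 * x ^ ((1:ℝ)/2) - 2 * ρ ^ ((1:ℝ)/2) := by
          rw [← intervalIntegral.integral_of_le hle]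
          have hderiv : ∀ y ∈ uIcc (x + ρ) (2 * x),
              HasDerivAt (fun y : ℝ => 2 * (y - x) ^ ((1:ℝ)/2)) ((y - x) ^ (-(1:ℝ)/2)) y := by
            intro y hy
            rw [uIcc_of_le hle] at hy
            have hy0 : (0:ℝ) < y - x := by have := hy.1; linarith
            have h1 : HasDerivAt (fun y : ℝ => y - x) 1 y := (hasDerivAt_id y).sub_const x
            have h2 : HasDerivAt (fun t : ℝ => t ^ ((1:ℝ)/2))
                ((1:ℝ)/2 * (y - x) ^ ((1:ℝ)/2 - 1)) (y - x) :=
              Real.hasDerivAt_rpow_const (Or.inl hy0.ne')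
            have h3 := (h2.comp y h1).const_mul (2:ℝ)
            refine h3.congr_deriv ?_
            rw [show (1:ℝ)/2 - 1 = -(1:ℝ)/2 by norm_num]
            ring
          rw [intervalIntegral.integral_eq_sub_of_hasDerivAt hderiv
            ((intervalIntegrable_iff_integrableOn_Ioc_of_le hle).mpr hint)]
          rw [show 2 * x - x = x by ring, show x + ρ - x = ρ by ring]
        rw [hval]
        calc ENNReal.ofReal (c * x ^ (-(2:ℝ))) *
              ENNReal.ofReal (2 * x ^ ((1:ℝ)/2) - 2 * ρ ^ ((1:ℝ)/2))
            ≤ ENNReal.ofReal (c * x ^ (-(2:ℝ))) * ENNReal.ofReal (2 * x ^ ((1:ℝ)/2)) := by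
              gcongr
              have : (0:ℝ) ≤ 2 * ρ ^ ((1:ℝ)/2) := by positivity
              linarith
          _ = ENNReal.ofReal ((c * x ^ (-(2:ℝ))) * (2 * x ^ ((1:ℝ)/2))) :=
              (ENNReal.ofReal_mul (by positivity)).symm
          _ = ENNReal.ofReal (2 * c * x ^ (-(3:ℝ)/2)) := by
              rw [show (c * x ^ (-(2:ℝ))) * (2 * x ^ ((1:ℝ)/2)) =
                  2 * c * (x ^ (-(2:ℝ)) * x ^ ((1:ℝ)/2)) by ring,
                ← Real.rpow_add hx0, show -(2:ℝ) + (1:ℝ)/2 = -(3:ℝ)/2 by norm_num]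
      · have hempty : Ioc (x + ρ) (2 * x) = (∅ : Set ℝ) :=
          Ioc_eq_empty (by intro h; exact hle (le_of_lt h))
        rw [hempty]
        simp
    · rw [indicator_of_notMem (show x ∉ Ici C from hx)]
      have hzero : ∀ y : ℝ, (A1.indicator g) (x, y) = 0 := fun y =>
        indicator_of_notMem (fun hmem => hx hmem.1.1) _
      rw [lintegral_congr hzero]
      simp
  calc ∫⁻ x : ℝ, ∫⁻ y : ℝ, (A1.indicator g) (x, y)
      ≤ ∫⁻ x : ℝ, (Ici C).indicator (fun x : ℝ => ENNReal.ofReal (2 * c * x ^ (-(3:ℝ)/2))) x :=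
        lintegral_mono inner_bound
    _ = ∫⁻ x : ℝ in Ici C, ENNReal.ofReal (2 * c * x ^ (-(3:ℝ)/2)) :=
        lintegral_indicator measurableSet_Ici _
    _ < ⊤ := by
      have hi : IntegrableOn (fun x : ℝ => 2 * c * x ^ (-(3:ℝ)/2)) (Ici C) :=
        Iff.mpr integrableOn_Ici_iff_integrableOn_Ioi
          ((integrableOn_Ioi_rpow_of_lt (by norm_num) hC).const_mul (2 * c))
      exact hi.lintegral_lt_top

lemma my_key (ν ρ C : ℝ) (hν : ν ∈ Set.Ioo (-1:ℝ) 1) (hρ : 0 < ρ) (hC : 0 < C) :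
    ∫⁻ p : ℝ × ℝ in {p : ℝ × ℝ | C ≤ p.1 ∧ p.1 + ρ ≤ p.2},
      ENNReal.ofReal (p.1 ^ (ν - 1) * p.2 ^ (-ν - 1) / (p.2 - p.1)) < ⊤ := by
  obtain ⟨hν1, hν2⟩ := hν
  set s : ℝ := (ν - 1)/2 with hs
  have hs0 : s < 0 := by rw [hs]; linarith
  have hs1 : (-1:ℝ) < s := by rw [hs]; linarith
  have hsub : {p : ℝ × ℝ | C ≤ p.1 ∧ p.1 + ρ ≤ p.2} ⊆
      {p : ℝ × ℝ | (C ≤ p.1 ∧ p.1 + ρ ≤ p.2) ∧ p.2 ≤ 2 * p.1} ∪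
      {p : ℝ × ℝ | (C ≤ p.1 ∧ p.1 + ρ ≤ p.2) ∧ 2 * p.1 ≤ p.2} := by
    intro p hp
    rcases le_total p.2 (2 * p.1) with h | h
    · exact Or.inl ⟨hp, h⟩
    · exact Or.inr ⟨hp, h⟩
  refine lt_of_le_of_lt (le_trans (lintegral_mono_set hsub) (lintegral_union_le _ _ _))
    (ENNReal.add_lt_top.mpr ⟨?_, ?_⟩)
  · -- near-diagonal piece
    refine lt_of_le_of_lt (setLIntegral_mono ?_ ?_) (my_pieceA1 ρ C hρ hC)
    · apply ENNReal.measurable_ofReal.comp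
      exact ((measurable_const.mul ((my_measurable_rpow_const _).comp measurable_fst))).mul
        ((my_measurable_rpow_const _).comp (measurable_snd.sub measurable_fst))
    · rintro ⟨x, y⟩ ⟨⟨h1, h2⟩, h3⟩
      exact ENNReal.ofReal_le_ofReal (my_bound1 hν1 hρ hC h1 h2 h3)
  · -- separated piece
    have step1 : ∫⁻ p : ℝ × ℝ in {p : ℝ × ℝ | (C ≤ p.1 ∧ p.1 + ρ ≤ p.2) ∧ 2 * p.1 ≤ p.2},
        ENNReal.ofReal (p.1 ^ (ν - 1) * p.2 ^ (-ν - 1) / (p.2 - p.1)) ≤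
        ∫⁻ p : ℝ × ℝ in Ici C ×ˢ Ici C,
          ENNReal.ofReal (2 * p.1 ^ ((ν - 1)/2 - 1) * p.2 ^ (-((ν - 1)/2) - 2)) := by
      refine le_trans (setLIntegral_mono ?_ ?_) (lintegral_mono_set ?_)
      · apply ENNReal.measurable_ofReal.comp
        exact ((measurable_const.mul ((my_measurable_rpow_const _).comp measurable_fst))).mul
          ((my_measurable_rpow_const _).comp measurable_snd)
      · rintro ⟨x, y⟩ ⟨⟨h1, h2⟩, h3⟩
        exact ENNReal.ofReal_le_ofReal (my_bound2 hν1 hρ hC h1 h2 h3)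
      · rintro ⟨x, y⟩ ⟨⟨h1, h2⟩, _⟩
        exact ⟨h1, by simp only [mem_Ici]; linarith⟩
    refine lt_of_le_of_lt step1 ?_
    rw [Measure.volume_eq_prod, ← Measure.prod_restrict]
    have hae : ∀ᵐ p : ℝ × ℝ
        ∂((volume.restrict (Ici C)).prod (volume.restrict (Ici C))),
        p ∈ Ici C ×ˢ Ici C := by
      rw [Measure.prod_restrict]
      exact ae_restrict_mem (measurableSet_Ici.prod measurableSet_Ici)
    have hcongr : ∫⁻ p : ℝ × ℝ, ENNReal.ofReal (2 * p.1 ^ ((ν - 1)/2 - 1) * p.2 ^ (-((ν - 1)/2) - 2))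
          ∂((volume.restrict (Ici C)).prod (volume.restrict (Ici C))) =
        ∫⁻ p : ℝ × ℝ, ENNReal.ofReal (2 * p.1 ^ ((ν - 1)/2 - 1)) *
          ENNReal.ofReal (p.2 ^ (-((ν - 1)/2) - 2))
          ∂((volume.restrict (Ici C)).prod (volume.restrict (Ici C))) := by
      apply lintegral_congr_ae
      filter_upwards [hae] with p hp
      have hx0 : (0:ℝ) < p.1 := lt_of_lt_of_le hC hp.1
      exact ENNReal.ofReal_mul (by positivity)
    rw [hcongr, lintegral_prod_mul
      (f := fun x : ℝ => ENNReal.ofReal (2 * x ^ ((ν - 1)/2 - 1)))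
      (g := fun y : ℝ => ENNReal.ofReal (y ^ (-((ν - 1)/2) - 2)))
      ((measurable_const.mul (my_measurable_rpow_const _)).ennreal_ofReal.aemeasurable)
      ((my_measurable_rpow_const _).ennreal_ofReal.aemeasurable)]
    have hi1 : IntegrableOn (fun x : ℝ => 2 * x ^ ((ν - 1)/2 - 1)) (Ici C) :=
      Iff.mpr integrableOn_Ici_iff_integrableOn_Ioi
        ((integrableOn_Ioi_rpow_of_lt (by linarith) hC).const_mul 2)
    have hi2 : IntegrableOn (fun y : ℝ => y ^ (-((ν - 1)/2) - 2)) (Ici C) :=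
      Iff.mpr integrableOn_Ici_iff_integrableOn_Ioi
        (integrableOn_Ioi_rpow_of_lt (by linarith) hC)
    exact ENNReal.mul_lt_top hi1.lintegral_lt_top hi2.lintegral_lt_top

/-- For `μ ∈ (−1,1)`, `ρ > 0`, `C > 0`, the double integral
`∬_{u₁,u₂ ≥ C, |u₁−u₂| ≥ ρ} u₁^{μ−1} u₂^{−μ−1} / |u₁ − u₂| du₁ du₂` is finite. -/
theorem double_integral_finite (μ ρ C : ℝ)
    (hμ : μ ∈ Set.Ioo (-1 : ℝ) 1) (hρ : 0 < ρ) (hC : 0 < C) :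
    IntegrableOn (fun p : ℝ × ℝ => p.1 ^ (μ - 1) * p.2 ^ (-μ - 1) / |p.1 - p.2|)
      {p : ℝ × ℝ | C ≤ p.1 ∧ C ≤ p.2 ∧ ρ ≤ |p.1 - p.2|} := by
  obtain ⟨hμ1, hμ2⟩ := hμ
  have mf : Measurable (fun p : ℝ × ℝ => p.1 ^ (μ - 1) * p.2 ^ (-μ - 1) / |p.1 - p.2|) :=
    (((my_measurable_rpow_const _).comp measurable_fst).mul
      ((my_measurable_rpow_const _).comp measurable_snd)).div
      ((measurable_fst.sub measurable_snd).abs)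
  refine ⟨mf.aestronglyMeasurable, ?_⟩
  rw [hasFiniteIntegral_iff_norm]
  have hsub : {p : ℝ × ℝ | C ≤ p.1 ∧ C ≤ p.2 ∧ ρ ≤ |p.1 - p.2|} ⊆
      {p : ℝ × ℝ | C ≤ p.1 ∧ p.1 + ρ ≤ p.2} ∪ {p : ℝ × ℝ | C ≤ p.2 ∧ p.2 + ρ ≤ p.1} := by
    rintro ⟨x, y⟩ ⟨h1, h2, h3⟩
    rcases le_total x y with h | h
    · left
      rw [abs_of_nonpos (by linarith : x - y ≤ 0)] at h3
      exact ⟨h1, by linarith⟩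
    · right
      rw [abs_of_nonneg (by linarith : (0:ℝ) ≤ x - y)] at h3
      exact ⟨h2, by linarith⟩
  refine lt_of_le_of_lt (le_trans (lintegral_mono_set hsub) (lintegral_union_le _ _ _))
    (ENNReal.add_lt_top.mpr ⟨?_, ?_⟩)
  · -- region x + ρ ≤ y
    refine lt_of_le_of_lt (setLIntegral_mono ?_ ?_) (my_key μ ρ C ⟨hμ1, hμ2⟩ hρ hC)
    · exact ((((my_measurable_rpow_const _).comp measurable_fst).mul
        ((my_measurable_rpow_const _).comp measurable_snd)).div
        (measurable_snd.sub measurable_fst)).ennreal_ofReal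
    · rintro ⟨x, y⟩ ⟨h1, h2⟩
      have hx0 : 0 < x := lt_of_lt_of_le hC h1
      have hy0 : 0 < y := by linarith
      have hd0 : 0 < y - x := by linarith
      apply ENNReal.ofReal_le_ofReal
      simp only [Real.norm_eq_abs]
      rw [show |x - y| = y - x by rw [abs_of_nonpos (by linarith)]; ring]
      rw [abs_of_nonneg (by positivity)]
  · -- region y + ρ ≤ x : use swap
    set F : ℝ × ℝ → ℝ≥0∞ :=
      fun q => ENNReal.ofReal (q.1 ^ (-μ - 1) * q.2 ^ (-(-μ) - 1) / (q.2 - q.1)) with hF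
    have mF : Measurable F :=
      ((((my_measurable_rpow_const _).comp measurable_fst).mul
        ((my_measurable_rpow_const _).comp measurable_snd)).div
        (measurable_snd.sub measurable_fst)).ennreal_ofReal
    have hSp : MeasurableSet {q : ℝ × ℝ | C ≤ q.1 ∧ q.1 + ρ ≤ q.2} :=
      (measurableSet_le measurable_const measurable_fst).inter
        (measurableSet_le (measurable_fst.add_const ρ) measurable_snd)
    have hSm : MeasurableSet {p : ℝ × ℝ | C ≤ p.2 ∧ p.2 + ρ ≤ p.1} :=
      (measurableSet_le measurable_const measurable_snd).inter
        (measurableSet_le (measurable_snd.add_const ρ) measurable_fst)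
    have hswapeq : ∫⁻ p : ℝ × ℝ in {p : ℝ × ℝ | C ≤ p.2 ∧ p.2 + ρ ≤ p.1}, F (Prod.swap p) =
        ∫⁻ q : ℝ × ℝ in {q : ℝ × ℝ | C ≤ q.1 ∧ q.1 + ρ ≤ q.2}, F q := by
      rw [← lintegral_indicator hSm, ← lintegral_indicator hSp, Measure.volume_eq_prod]
      rw [← (Measure.measurePreserving_swap (μ := (volume : Measure ℝ))
        (ν := (volume : Measure ℝ))).lintegral_comp (mF.indicator hSp)]
      apply lintegral_congr
      intro p
      have hpre : (Prod.swap ⁻¹' {q : ℝ × ℝ | C ≤ q.1 ∧ q.1 + ρ ≤ q.2}) =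
          {p : ℝ × ℝ | C ≤ p.2 ∧ p.2 + ρ ≤ p.1} := rfl
      calc Set.indicator {p : ℝ × ℝ | C ≤ p.2 ∧ p.2 + ρ ≤ p.1} (fun p => F (Prod.swap p)) p
          = Set.indicator (Prod.swap ⁻¹' {q : ℝ × ℝ | C ≤ q.1 ∧ q.1 + ρ ≤ q.2})
              (F ∘ Prod.swap) p := by rw [hpre]; rfl
        _ = Set.indicator {q : ℝ × ℝ | C ≤ q.1 ∧ q.1 + ρ ≤ q.2} F (Prod.swap p) :=
            Set.indicator_comp_right Prod.swap
    have hbound : ∀ p ∈ {p : ℝ × ℝ | C ≤ p.2 ∧ p.2 + ρ ≤ p.1},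
        ENNReal.ofReal ‖p.1 ^ (μ - 1) * p.2 ^ (-μ - 1) / |p.1 - p.2|‖ ≤ F (Prod.swap p) := by
      rintro ⟨x, y⟩ ⟨h1, h2⟩
      have hy0 : 0 < y := lt_of_lt_of_le hC h1
      have hx0 : 0 < x := by linarith
      have hd0 : 0 < x - y := by linarith
      apply ENNReal.ofReal_le_ofReal
      simp only [Real.norm_eq_abs, Prod.swap_prod_mk, hF]
      rw [show |x - y| = x - y from abs_of_nonneg (by linarith)]
      rw [abs_of_nonneg (by positivity), neg_neg]
      apply le_of_eq
      ring
    refine lt_of_le_of_lt (setLIntegral_mono (mF.comp measurable_swap) hbound) ?_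
    have : ∫⁻ p : ℝ × ℝ in {p : ℝ × ℝ | C ≤ p.2 ∧ p.2 + ρ ≤ p.1}, (F ∘ Prod.swap) p =
        ∫⁻ p : ℝ × ℝ in {p : ℝ × ℝ | C ≤ p.2 ∧ p.2 + ρ ≤ p.1}, F (Prod.swap p) := rfl
    rw [this, hswapeq]
    exact my_key (-μ) ρ C ⟨by linarith, by linarith⟩ hρ hC
end

section
/- Fix c ∈ (0, 1/2) and ρ ∈ (0, 1/2). For ξ ∈ (0,1) close enough to 1, set ε = 1 − ξ. The Möbius transform ω ↦ (1 − √ξ ω)/(ω − √ξ) maps the circle |ω'| = 1 − cε to a circle S intersecting the real axis at points ω_− = (c + 1/2)/(c − 1/2) + O(ε) < 0 and ω_+ = 1 + O(ε²), and ω_+ < 1/√ξ − ερ. Consequently, |(1 − √ξ ω)/(ω − √ξ)| < 1 − cε for all ω with Re ω ≥ 1/√ξ − ερ lying outside the circle S (in particular for all ω on the contour C(R, ερ, ξ) when R is large enough). -/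
open Set

set_option maxHeartbeats 1000000 in
/-- Fix `c ∈ (0,1/2)` and `ρ ∈ (0,1/2)`.  For `ξ` close enough to `1`, with `ε = 1−ξ`,
the Möbius transform `ω ↦ (1 − √ξ ω)/(ω − √ξ)` maps the circle `|ω'| = 1 − cε` to a
circle `S` meeting the real axis at `ω₋ = (c+1/2)/(c−1/2) + O(ε)` and `ω₊ = 1 + O(ε²)`,
with `ω₊ < 1/√ξ − ερ`; consequently `|(1 − √ξ ω)/(ω − √ξ)| < 1 − cε` for all `ω` with
`Re ω ≥ 1/√ξ − ερ` (which lie outside `S`). -/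
theorem moebius_contour_estimate (c ρ : ℝ)
    (hc : c ∈ Ioo (0 : ℝ) (1 / 2)) (hρ : ρ ∈ Ioo (0 : ℝ) (1 / 2)) :
    ∃ K₁ K₂ ξ₀ : ℝ, ξ₀ ∈ Ioo (0 : ℝ) 1 ∧
      ∀ ξ ∈ Ioo (0 : ℝ) 1, ξ₀ < ξ →
        |(1 + Real.sqrt ξ * (-(1 - c * (1 - ξ)))) / (-(1 - c * (1 - ξ)) + Real.sqrt ξ) -
            (c + 1 / 2) / (c - 1 / 2)| ≤ K₁ * (1 - ξ) ∧
        |(1 + Real.sqrt ξ * (1 - c * (1 - ξ))) / ((1 - c * (1 - ξ)) + Real.sqrt ξ) - 1| ≤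
            K₂ * (1 - ξ) ^ 2 ∧
        (1 + Real.sqrt ξ * (1 - c * (1 - ξ))) / ((1 - c * (1 - ξ)) + Real.sqrt ξ) <
            1 / Real.sqrt ξ - (1 - ξ) * ρ ∧
        ∀ ω : ℂ, 1 / Real.sqrt ξ - (1 - ξ) * ρ ≤ ω.re →
          ‖(1 - (Real.sqrt ξ : ℂ) * ω) / (ω - (Real.sqrt ξ : ℂ))‖ < 1 - c * (1 - ξ) := by
  obtain ⟨hc0, hc2⟩ := hc
  obtain ⟨hρ0, hρ2⟩ := hρ
  refine ⟨3 * c / 2 / (1 / 2 - c) ^ 2, 2 * c, max (4 * ρ - 1) (1 / 2), ⟨?_, ?_⟩, ?_⟩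
  · exact lt_of_lt_of_le (by norm_num) (le_max_right _ _)
  · apply max_lt <;> nlinarith
  intro ξ hξ hξ₀
  obtain ⟨hξ0, hξ1⟩ := hξ
  have hξh : 1 / 2 < ξ := lt_of_le_of_lt (le_max_right _ _) hξ₀
  have hξρ : 4 * ρ - 1 < ξ := lt_of_le_of_lt (le_max_left _ _) hξ₀
  have hs0 : 0 < Real.sqrt ξ := Real.sqrt_pos.mpr hξ0
  have hs2 : Real.sqrt ξ ^ 2 = ξ := Real.sq_sqrt hξ0.le
  obtain ⟨s, hsg⟩ : ∃ s, Real.sqrt ξ = s := ⟨_, rfl⟩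
  rw [hsg] at hs0 hs2 ⊢
  subst hs2
  clear hsg hξ₀
  have hs1 : s < 1 := by nlinarith
  -- basic facts
  have hc4 : (0 : ℝ) < 1 / 2 - c := by linarith
  have heps0 : 0 < 1 - s ^ 2 := by nlinarith
  have heps : 1 - s ^ 2 < 1 / 2 := by linarith
  have hepsρ : 1 - s ^ 2 < 2 - 4 * ρ := by linarith
  have ha34 : (3 : ℝ) / 4 < 1 - c * (1 - s ^ 2) := by nlinarith
  have ha1 : 1 - c * (1 - s ^ 2) < 1 := by nlinarith
  have hsa : s < 1 - c * (1 - s ^ 2) := by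
    have h1 : s ^ 2 < (1 - c * (1 - s ^ 2)) ^ 2 := by nlinarith
    nlinarith [h1, hs0, ha34]
  have hden2 : 0 < (1 - c * (1 - s ^ 2)) + s := by linarith
  -- goal 3
  have hg3 : (1 + s * (1 - c * (1 - s ^ 2))) / ((1 - c * (1 - s ^ 2)) + s) <
      1 / s - (1 - s ^ 2) * ρ := by
    have haρ : 2 * ρ < 1 - c * (1 - s ^ 2) := by nlinarith [mul_pos hc4 heps0]
    have h2s : (1 - c * (1 - s ^ 2)) + s < 2 := by linarith
    have hkey : s * ρ * ((1 - c * (1 - s ^ 2)) + s) < 1 - c * (1 - s ^ 2) := by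
      nlinarith [mul_pos (mul_pos hρ0 hden2) (sub_pos.2 hs1),
        mul_pos hρ0 (sub_pos.2 h2s)]
    have h : (1 + s * (1 - c * (1 - s ^ 2))) / ((1 - c * (1 - s ^ 2)) + s) <
        (1 - s * ((1 - s ^ 2) * ρ)) / s := by
      rw [div_lt_div_iff₀ hden2 hs0]
      nlinarith [mul_pos heps0 (sub_pos.2 hkey)]
    have h2 : (1 - s * ((1 - s ^ 2) * ρ)) / s = 1 / s - (1 - s ^ 2) * ρ := by
      field_simp
    linarith [h, h2.le, h2.ge]
  refine ⟨?_, ?_, hg3, ?_⟩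
  -- goal 1
  · have hden1 : -(1 - c * (1 - s ^ 2)) + s < 0 := by linarith
    have hc12 : c - 1 / 2 < 0 := by linarith
    have hD : 0 < (-(1 - c * (1 - s ^ 2)) + s) * (c - 1 / 2) := mul_pos_of_neg_of_neg hden1 hc12
    rw [div_sub_div _ _ hden1.ne hc12.ne, abs_div, abs_of_pos hD, div_le_iff₀ hD]
    have hNfact : (1 + s * -(1 - c * (1 - s ^ 2))) * (c - 1 / 2) -
        (-(1 - c * (1 - s ^ 2)) + s) * (c + 1 / 2)
        = c * (1 - s) ^ 2 * ((3 / 2 - c) + (1 / 2 - c) * s) := by ring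
    have hNpos : 0 < (1 + s * -(1 - c * (1 - s ^ 2))) * (c - 1 / 2) -
        (-(1 - c * (1 - s ^ 2)) + s) * (c + 1 / 2) := by
      rw [hNfact]
      have hB0 : (0:ℝ) < (3 / 2 - c) + (1 / 2 - c) * s := by nlinarith [mul_pos hc4 hs0]
      exact mul_pos (mul_pos hc0 (pow_pos (sub_pos.2 hs1) 2)) hB0
    rw [abs_of_pos hNpos, hNfact]
    rw [div_mul_eq_mul_div, div_mul_eq_mul_div, le_div_iff₀ (by positivity : (0:ℝ) < (1/2 - c)^2)]
    have hB : ((3 / 2 - c) + (1 / 2 - c) * s) * (1 / 2 - c) ≤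
        3 / 2 * (1 + s) * (1 - c * (1 + s)) := by
      nlinarith [mul_pos (mul_pos hc0 hc4) hs0, mul_pos hc0 hc4,
        mul_pos hc4 hs0, mul_pos hc4 (mul_pos hs0 hs0), heps0]
    have hm : (0 : ℝ) ≤ c * (1 - s) ^ 2 * (1 / 2 - c) := by positivity
    nlinarith [mul_le_mul_of_nonneg_left hB hm]
  -- goal 2
  · have hkey2 : (1 + s * (1 - c * (1 - s ^ 2))) / ((1 - c * (1 - s ^ 2)) + s) - 1 =
        c * (1 - s) ^ 2 * (1 + s) / ((1 - c * (1 - s ^ 2)) + s) := by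
      field_simp
      ring
    rw [hkey2, abs_div, abs_of_pos hden2, div_le_iff₀ hden2,
      abs_of_nonneg (by positivity : (0:ℝ) ≤ c * (1 - s) ^ 2 * (1 + s))]
    have h2 : (1 : ℝ) ≤ 2 * (1 + s) * ((1 - c * (1 - s ^ 2)) + s) := by nlinarith
    have hm : (0 : ℝ) ≤ c * (1 - s) ^ 2 * (1 + s) := by positivity
    nlinarith [mul_le_mul_of_nonneg_left h2 hm]
  -- goal 4
  · intro ω hω
    have hxs : s < ω.re := by
      have h1 : s + (1 - s ^ 2) * ρ < 1 / s := by
        rw [lt_div_iff₀ hs0]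
        nlinarith [mul_pos (mul_pos hs0 hρ0) heps0, mul_pos heps0 hs0]
      linarith
    have hx0 : 0 < ω.re := lt_trans hs0 hxs
    have hx1 : 1 + s * (1 - c * (1 - s ^ 2)) < ω.re * ((1 - c * (1 - s ^ 2)) + s) :=
      (div_lt_iff₀ hden2).mp (lt_of_lt_of_le hg3 hω)
    have hωne : ω - (s : ℂ) ≠ 0 := by
      intro h
      have h2 : (ω - (s : ℂ)).re = 0 := by rw [h]; simp
      simp [Complex.sub_re] at h2
      linarith
    have hnorm : 0 < ‖ω - (s : ℂ)‖ := norm_pos_iff.mpr hωne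
    rw [norm_div, div_lt_iff₀ hnorm]
    have e1 : ‖1 - (s : ℂ) * ω‖ ^ 2 = (1 - s * ω.re) ^ 2 + (s * ω.im) ^ 2 := by
      rw [Complex.sq_norm, Complex.normSq_apply]
      simp [Complex.mul_re, Complex.mul_im]
      ring
    have e2 : ‖ω - (s : ℂ)‖ ^ 2 = (ω.re - s) ^ 2 + ω.im ^ 2 := by
      rw [Complex.sq_norm, Complex.normSq_apply]
      simp
      ring
    have hP : (1 - s * ω.re) ^ 2 + (s * ω.im) ^ 2 <
        (1 - c * (1 - s ^ 2)) ^ 2 * ((ω.re - s) ^ 2 + ω.im ^ 2) := by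
      have h1 : 0 < ω.re * ((1 - c * (1 - s ^ 2)) + s) - (1 + s * (1 - c * (1 - s ^ 2))) := by
        linarith
      have h2 : 0 < ((1 - c * (1 - s ^ 2)) - s) * ω.re + (1 - (1 - c * (1 - s ^ 2)) * s) := by
        have has1 : (1 - c * (1 - s ^ 2)) * s < 1 := by
          nlinarith [mul_pos (mul_pos hc0 heps0) hs0]
        nlinarith [mul_pos (sub_pos.2 hsa) hx0, has1]
      nlinarith [mul_pos h1 h2,
        mul_nonneg (by nlinarith : (0:ℝ) ≤ (1 - c * (1 - s ^ 2)) ^ 2 - s ^ 2) (sq_nonneg ω.im)]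
    nlinarith [hP, e1, e2, norm_nonneg (1 - (s : ℂ) * ω),
      mul_pos (by nlinarith : (0:ℝ) < 1 - c * (1 - s ^ 2)) hnorm]
end

section
/- For a point u = |u| e^{iθ} in ℂ with |u| large and θ → 0, one has |u/(1+u)| = 1 − |u|^{-1} cos θ + O(|u|^{-2}). Consequently, for any δ > 0 there is a constant C_δ such that for u_1, u_2 on the contours [+∞ − iρ, 0−, +∞ + iρ] (with |u_1|, |u_2| large), 2 + 2 log(1/(1 − |u_1 u_2/((1+u_1)(1+u_2))|)) ≤ C_δ |u_1|^{δ} |u_2|^{δ}. -/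
open Complex

/-- Single-contour estimate: for `u` with `|Im u| = ρ` and large real part,
`‖u/(1+u)‖ < 1` and `1 - ‖u/(1+u)‖ ≥ 1/(6‖u‖)`. -/
lemma aux_contour (ρ : ℝ) (hρ : 0 < ρ) (u : ℂ) (him : |u.im| = ρ)
    (hre : max 1 ρ ≤ u.re) :
    1 ≤ ‖u‖ ∧ ‖u‖/‖1+u‖ < 1 ∧ 1/(6*‖u‖) ≤ 1 - ‖u‖/‖1+u‖ := by
  set a := u.re with ha
  have ha1 : 1 ≤ a := le_trans (le_max_left _ _) hre
  have haρ : ρ ≤ a := le_trans (le_max_right _ _) hre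
  have him2 : u.im^2 = ρ^2 := by rw [← him]; exact (_root_.sq_abs _).symm
  set nu := ‖u‖ with hnu
  set mu := ‖1+u‖ with hmu
  have hnu0 : 0 ≤ nu := norm_nonneg _
  have hmu0 : 0 ≤ mu := norm_nonneg _
  have hnu2 : nu^2 = a^2 + ρ^2 := by
    rw [hnu, Complex.sq_norm, Complex.normSq_apply, ha]
    nlinarith [him2]
  have hmu2 : mu^2 = (1+a)^2 + ρ^2 := by
    rw [hmu, Complex.sq_norm, Complex.normSq_apply]
    simp only [Complex.add_re, Complex.add_im, Complex.one_re, Complex.one_im]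
    nlinarith [him2]
  have hlt : nu < mu := by nlinarith
  have hnu1 : 1 ≤ nu := by nlinarith
  have hmule : mu ≤ 1 + nu := by
    calc mu = ‖(1:ℂ)+u‖ := rfl
      _ ≤ ‖(1:ℂ)‖ + ‖u‖ := norm_add_le _ _
      _ = 1 + nu := by rw [norm_one]
  have hnule : nu ≤ 2*a := by nlinarith
  have hprod : (mu-nu)*(mu+nu) = 1+2*a := by nlinarith [hmu2, hnu2]
  refine ⟨hnu1, ?_, ?_⟩
  · rw [div_lt_one (by linarith)]; exact hlt
  · have h6 : mu + nu ≤ 3*nu := by linarith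
    have hmne : mu ≠ 0 := by linarith
    have heq : 1 - nu/mu = (mu-nu)/mu := by rw [sub_div, div_self hmne]
    rw [heq, div_le_div_iff₀ (by positivity) (by linarith)]
    nlinarith [mul_le_mul_of_nonneg_left h6 (le_of_lt (sub_pos.2 hlt))]

/-- For `x ≥ 1` and `δ > 0`, `log x ≤ x^δ/δ` and `x^δ ≥ 1`. -/
lemma aux_log_piece (δ : ℝ) (hδ : 0 < δ) (x : ℝ) (hx : 1 ≤ x) :
    Real.log x ≤ x ^ δ / δ ∧ 1 ≤ x ^ δ := by
  have h0 : 0 < x := lt_of_lt_of_le one_pos hx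
  have hp : 0 < x ^ δ := Real.rpow_pos_of_pos h0 δ
  have h1 : 1 ≤ x ^ δ := Real.one_le_rpow hx hδ.le
  have h2 : Real.log (x ^ δ) ≤ x ^ δ - 1 := Real.log_le_sub_one_of_pos hp
  rw [Real.log_rpow h0] at h2
  refine ⟨?_, h1⟩
  rw [le_div_iff₀ hδ]
  linarith

set_option maxHeartbeats 1000000 in
/-- For `u = t e^{iθ}` with `t = |u|` large, `|u/(1+u)| = 1 − t⁻¹ cos θ + O(t⁻²)`
(uniformly in `θ`); consequently, for any `δ > 0` there is a constant `C_δ` such that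
for `u₁, u₂` on the contours `[+∞ − iρ, 0−, +∞ + iρ]` with large real part,
`2 + 2 log(1/(1 − |u₁u₂/((1+u₁)(1+u₂))|)) ≤ C_δ |u₁|^δ |u₂|^δ`. -/
theorem contour_log_estimate (ρ : ℝ) (hρ : 0 < ρ) :
    (∃ C₀ T : ℝ, ∀ t θ : ℝ, T ≤ t →
        |‖(t * Complex.exp (θ * Complex.I)) / (1 + t * Complex.exp (θ * Complex.I))‖ -
            (1 - Real.cos θ / t)| ≤ C₀ / t ^ 2) ∧
    ∀ δ > (0 : ℝ), ∃ Cδ T : ℝ, ∀ u₁ u₂ : ℂ,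
      |u₁.im| = ρ → T ≤ u₁.re → |u₂.im| = ρ → T ≤ u₂.re →
      ‖u₁ * u₂ / ((1 + u₁) * (1 + u₂))‖ < 1 ∧
      2 + 2 * Real.log (1 / (1 - ‖u₁ * u₂ / ((1 + u₁) * (1 + u₂))‖)) ≤
        Cδ * ‖u₁‖ ^ δ * ‖u₂‖ ^ δ := by
  constructor
  · -- the asymptotic expansion `|u/(1+u)| = 1 - cos θ / t + O(1/t²)`
    refine ⟨10, 2, ?_⟩
    intro t θ ht
    have ht0 : (0:ℝ) < t := by linarith
    set c := Real.cos θ with hcdef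
    have hc1 : |c| ≤ 1 := Real.abs_cos_le_one θ
    set D := ‖(1:ℂ) + t * Complex.exp (θ * Complex.I)‖ with hDdef
    have hD2 : D^2 = 1 + 2*t*c + t^2 := by
      have h : ((1:ℂ) + t * Complex.exp (θ * Complex.I)) = ⟨1 + t*c, t*Real.sin θ⟩ := by
        rw [Complex.exp_mul_I]
        apply Complex.ext <;> simp [Complex.cos_ofReal_re, Complex.sin_ofReal_re, hcdef]
      rw [hDdef, Complex.sq_norm, h, Complex.normSq_mk]
      nlinarith [Real.sin_sq_add_cos_sq θ]
    have hDge : t - 1 ≤ D := by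
      have hD0 : (0:ℝ) ≤ D := norm_nonneg _
      nlinarith [abs_le.1 hc1]
    have hD0 : (0:ℝ) < D := by linarith
    have hnorm : ‖(t * Complex.exp (θ * Complex.I)) / (1 + t * Complex.exp (θ * Complex.I))‖
        = t / D := by
      rw [norm_div, hDdef]
      congr 1
      simp [Complex.norm_exp, abs_of_pos ht0]
    rw [hnorm]
    have h1 : t/D - (1-c/t) = (t^2 - (t-c)*D)/(t*D) := by
      field_simp
    have h2 : (t^2 - (t-c)*D) * (t^2 + (t-c)*D)
        = (3*c^2-1)*t^2 + 2*c*(1-c^2)*t - c^2 := by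
      linear_combination (-(t-c)^2) * hD2
    have hP : (0:ℝ) < t^2 + (t-c)*D := by
      have : 1 ≤ t - c := by linarith [(abs_le.1 hc1).2]
      nlinarith
    obtain ⟨hcl, hcu⟩ := abs_le.1 hc1
    have hc2 : c^2 ≤ 1 := by nlinarith
    have hNabs : |(3*c^2-1)*t^2 + 2*c*(1-c^2)*t - c^2| ≤ 5*t^2 := by
      rw [abs_le]
      constructor
      · nlinarith [mul_nonneg (mul_nonneg (by nlinarith : (0:ℝ) ≤ 1-c^2)
            (by linarith : (0:ℝ) ≤ 1+c)) ht0.le,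
          mul_le_mul_of_nonneg_right hc2 (sq_nonneg t), sq_nonneg c, mul_pos ht0 ht0]
      · nlinarith [mul_nonneg (mul_nonneg (by nlinarith : (0:ℝ) ≤ 1-c^2)
            (by linarith : (0:ℝ) ≤ 1-c)) ht0.le,
          mul_le_mul_of_nonneg_right hc2 (sq_nonneg t), sq_nonneg c, mul_pos ht0 ht0]
    have hnum : |t^2 - (t-c)*D| ≤ 5 := by
      have h3 : |t^2 - (t-c)*D| * (t^2 + (t-c)*D) ≤ 5*t^2 := by
        calc |t^2 - (t-c)*D| * (t^2 + (t-c)*D) = |(t^2 - (t-c)*D) * (t^2 + (t-c)*D)| := by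
              rw [abs_mul, abs_of_pos hP]
          _ ≤ 5*t^2 := by rw [h2]; exact hNabs
      have ht2 : t^2 ≤ t^2 + (t-c)*D := by nlinarith
      nlinarith [abs_nonneg (t^2 - (t-c)*D)]
    rw [h1, abs_div, abs_of_pos (by positivity : (0:ℝ) < t*D)]
    rw [div_le_div_iff₀ (by positivity) (by positivity)]
    calc |t^2-(t-c)*D| * t^2 ≤ 5 * t^2 := by nlinarith [sq_nonneg t]
      _ ≤ 10 * (t*D) := by nlinarith
  · -- the consequent logarithmic bound on the contour
    intro δ hδ
    refine ⟨12 + 2/δ, max 1 ρ, ?_⟩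
    intro u₁ u₂ h1 h2 h3 h4
    obtain ⟨hn1, hr1, hg1⟩ := aux_contour ρ hρ u₁ h1 h2
    obtain ⟨hn2, hr2, hg2⟩ := aux_contour ρ hρ u₂ h3 h4
    set r₁ := ‖u₁‖/‖1+u₁‖ with hr₁def
    set r₂ := ‖u₂‖/‖1+u₂‖ with hr₂def
    have hr₁0 : 0 ≤ r₁ := div_nonneg (norm_nonneg _) (norm_nonneg _)
    have hr₂0 : 0 ≤ r₂ := div_nonneg (norm_nonneg _) (norm_nonneg _)
    have hnorm : ‖u₁ * u₂ / ((1 + u₁) * (1 + u₂))‖ = r₁ * r₂ := by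
      rw [norm_div, norm_mul, norm_mul, hr₁def, hr₂def]
      ring
    rw [hnorm]
    have hmul : r₁ * r₂ ≤ r₁ := by nlinarith
    have hrlt : r₁ * r₂ < 1 := lt_of_le_of_lt hmul hr1
    refine ⟨hrlt, ?_⟩
    have hkey : 1/(6*‖u₁‖) ≤ 1 - r₁*r₂ := le_trans hg1 (by linarith)
    have hnu1 : (0:ℝ) < ‖u₁‖ := lt_of_lt_of_le one_pos hn1
    have hpos : (0:ℝ) < 1 - r₁*r₂ := lt_of_lt_of_le (by positivity) hkey
    have hrecip : 1/(1 - r₁*r₂) ≤ 6*‖u₁‖ := by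
      rw [div_le_iff₀ hpos]
      calc (1:ℝ) = 6*‖u₁‖ * (1/(6*‖u₁‖)) := by rw [mul_one_div, div_self (by positivity)]
        _ ≤ 6*‖u₁‖ * (1 - r₁*r₂) := by
            apply mul_le_mul_of_nonneg_left hkey (by positivity)
    have hlog : Real.log (1/(1 - r₁*r₂)) ≤ Real.log 6 + Real.log ‖u₁‖ := by
      rw [← Real.log_mul (by norm_num) (ne_of_gt hnu1)]
      exact Real.log_le_log (by positivity) hrecip
    have hlog6 : Real.log 6 ≤ 5 := by
      have := Real.log_le_sub_one_of_pos (by norm_num : (0:ℝ) < 6)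
      linarith
    obtain ⟨hl1, hp1⟩ := aux_log_piece δ hδ ‖u₁‖ hn1
    obtain ⟨_, hp2⟩ := aux_log_piece δ hδ ‖u₂‖ hn2
    have hstep : (12 + 2/δ) * ‖u₁‖^δ ≤ (12 + 2/δ) * ‖u₁‖^δ * ‖u₂‖^δ :=
      le_mul_of_one_le_right (by positivity) hp2
    have heq : (12 + 2/δ) * ‖u₁‖^δ = 12*‖u₁‖^δ + 2*(‖u₁‖^δ/δ) := by ring
    nlinarith [hp1]
end
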